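/- Let K be a field, d ≥ 1, and consider the map μ: K^m × K^n → K^{m+n} sending a pair of monic polynomials (p, q) of degrees m and n (identified with their coefficient tuples) to the coefficient tuple of the product pq. Then the corresponding ring map K[z_1,...,z_{m+n}] → K[x_1,...,x_m, y_1,...,y_n] (sending the coefficients of a generic monic degree m+n polynomial to the coefficients of the product of generic monic polynomials of degrees m and n) makes K[x,y] a finitely generated module over the image; equivalently, the morphism 𝔸^m × 𝔸^n → 𝔸^{m+n} given by multiplication of monic polynomials is a finite morphism of affine varieties. -/

import Mathlib

open Polynomial

section Aux

/-- Coefficients of a monic divisor of (the image of) a monic polynomial are integral. -/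
lemma aux_coeff_isIntegralElem {B A : Type*} [CommRing B] [CommRing A] [IsDomain A]
    (f : B →+* A) {G : B[X]} (hG : G.Monic) {P : A[X]} (hP : P.Monic)
    (hdvd : P ∣ G.map f) (k : ℕ) : f.IsIntegralElem (P.coeff k) := by
  classical
  let L := AlgebraicClosure (FractionRing A)
  let j : A →+* L := (algebraMap (FractionRing A) L).comp (algebraMap A (FractionRing A))
  have hj : Function.Injective j :=
    (algebraMap (FractionRing A) L).injective.comp (IsFractionRing.injective A (FractionRing A))
  letI : Algebra B L := (j.comp f).toAlgebra
  have halg : algebraMap B L = j.comp f := rfl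
  set Q := P.map j with hQ
  have hQm : Q.Monic := hP.map j
  have hQdvd : Q ∣ G.map (algebraMap B L) := by
    rw [halg, ← Polynomial.map_map]
    exact Polynomial.map_dvd j hdvd
  have hsplit : Q.Splits := IsAlgClosed.splits Q
  have hroots : ∀ a ∈ Q.roots, a ∈ (algebraMap (integralClosure B L) L).range := by
    intro a ha
    have haG : a ∈ (G.map (algebraMap B L)).roots :=
      Multiset.mem_of_le (roots.le_of_dvd ((hG.map _).ne_zero) hQdvd) ha
    have : a ∈ integralClosure B L := roots_mem_integralClosure hG haG
    exact (SetLike.ext_iff.mp (integralClosure B L).range_algebraMap _).mpr this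
  have hl := hsplit.mem_lift_of_roots_mem_range hQm (algebraMap (integralClosure B L) L) hroots
  rw [lifts_iff_coeff_lifts] at hl
  obtain ⟨c, hc⟩ := hl k
  obtain ⟨r, hrm, hr⟩ := c.2
  refine ⟨r, hrm, hj ?_⟩
  have hcv : (c : L) = j (P.coeff k) := by
    rw [show ((c : L)) = Q.coeff k from hc, hQ, coeff_map]
  rw [map_zero, ← hr, hcv, halg]
  exact Polynomial.hom_eval₂ r f j (P.coeff k)

/-- Coefficients of a "generic monic" polynomial. -/
lemma aux_coeff_generic {A : Type*} [CommRing A] {N : ℕ} (a : Fin N → A) (i : Fin N) :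
    (X ^ N + ∑ i : Fin N, C (a i) * X ^ (i : ℕ)).coeff (i : ℕ) = a i := by
  classical
  rw [coeff_add, coeff_X_pow, if_neg (Nat.ne_of_gt i.2).symm, zero_add, finset_sum_coeff]
  rw [Finset.sum_eq_single i]
  · simp
  · intro b _ hb
    rw [coeff_C_mul, coeff_X_pow, if_neg, mul_zero]
    exact fun h => hb (Fin.ext h.symm)
  · simp

lemma aux_monic_generic {A : Type*} [CommRing A] [Nontrivial A] {N : ℕ} (a : Fin N → A) :
    (X ^ N + ∑ i : Fin N, C (a i) * X ^ (i : ℕ)).Monic ∧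
    (X ^ N + ∑ i : Fin N, C (a i) * X ^ (i : ℕ)).natDegree = N := by
  classical
  have hdeg : (∑ i : Fin N, C (a i) * X ^ (i : ℕ)).degree < (N : WithBot ℕ) := by
    refine lt_of_le_of_lt (degree_sum_le _ _) ?_
    rw [Finset.sup_lt_iff (by exact_mod_cast WithBot.bot_lt_coe N)]
    intro i _
    refine lt_of_le_of_lt (degree_C_mul_X_pow_le _ _) ?_
    exact_mod_cast i.2
  have hmono : (X ^ N + ∑ i : Fin N, C (a i) * X ^ (i : ℕ)).Monic := monic_X_pow_add hdeg
  refine ⟨hmono, ?_⟩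
  have : (X ^ N + ∑ i : Fin N, C (a i) * X ^ (i : ℕ)).degree = (N : WithBot ℕ) := by
    rw [add_comm, degree_add_eq_right_of_degree_lt (by rwa [degree_X_pow]), degree_X_pow]
  exact natDegree_eq_of_degree_eq_some this

end Aux

/-- multiplication of monic polynomials, `𝔸^m × 𝔸^n → 𝔸^(m+n)`, is a finite
morphism: the ring map sending the coefficients of a generic monic polynomial of degree
`m + n` to the coefficients of the product of generic monic polynomials of degrees `m`
and `n` makes `K[x_1,…,x_m,y_1,…,y_n]` a finite module over (the image of)
`K[z_1,…,z_(m+n)]`. -/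
theorem stmt_6 (K : Type*) [Field K] (m n : ℕ) (hm : 1 ≤ m) (hn : 1 ≤ n)
    (p q : Polynomial (MvPolynomial (Fin m ⊕ Fin n) K))
    (hp : p = X ^ m + ∑ i : Fin m, C (MvPolynomial.X (Sum.inl i)) * X ^ (i : ℕ))
    (hq : q = X ^ n + ∑ j : Fin n, C (MvPolynomial.X (Sum.inr j)) * X ^ (j : ℕ)) :
    RingHom.Finite
      (MvPolynomial.aeval (R := K)
        (fun k : Fin (m + n) => (p * q).coeff (k : ℕ))).toRingHom := by
  classical
  set A := MvPolynomial (Fin m ⊕ Fin n) K with hA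
  set B := MvPolynomial (Fin (m + n)) K with hB
  set f := (MvPolynomial.aeval (R := K)
      (fun k : Fin (m + n) => (p * q).coeff (k : ℕ))).toRingHom with hfdef
  have hpm : p.Monic := hp ▸ (aux_monic_generic _).1
  have hqm : q.Monic := hq ▸ (aux_monic_generic _).1
  have hpd : p.natDegree = m := hp ▸ (aux_monic_generic _).2
  have hqd : q.natDegree = n := hq ▸ (aux_monic_generic _).2
  have hpqm : (p * q).Monic := hpm.mul hqm
  have hpqd : (p * q).natDegree = m + n := by
    rw [hpm.natDegree_mul hqm, hpd, hqd]
  set G : B[X] := X ^ (m + n) + ∑ k : Fin (m + n), C (MvPolynomial.X k) * X ^ (k : ℕ)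
    with hGdef
  have hGm : G.Monic := (aux_monic_generic _).1
  have hmap : G.map f = p * q := by
    have h1 : p * q
        = X ^ (m + n) + ∑ i ∈ Finset.range (m + n), C ((p * q).coeff i) * X ^ i := by
      conv_lhs => rw [hpqm.as_sum]
      rw [hpqd]
    rw [hGdef, Polynomial.map_add, Polynomial.map_pow, Polynomial.map_X, Polynomial.map_sum,
      h1, ← Fin.sum_univ_eq_sum_range (fun i => C ((p * q).coeff i) * X ^ i) (m + n)]
    congr 1
    refine Finset.sum_congr rfl fun k _ => ?_
    rw [Polynomial.map_mul, Polynomial.map_C, Polynomial.map_pow, Polynomial.map_X]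
    congr 1
    simp [hfdef]
  have hXint : ∀ s : Fin m ⊕ Fin n, f.IsIntegralElem (MvPolynomial.X s : A) := by
    rintro (i | j)
    · have hpc : (MvPolynomial.X (Sum.inl i) : A) = p.coeff i := by
        rw [hp]; exact (aux_coeff_generic (fun i : Fin m => (MvPolynomial.X (Sum.inl i) : A)) i).symm
      rw [hpc]
      exact aux_coeff_isIntegralElem f hGm hpm (hmap ▸ dvd_mul_right p q) i
    · have hqc : (MvPolynomial.X (Sum.inr j) : A) = q.coeff j := by
        rw [hq]; exact (aux_coeff_generic (fun j : Fin n => (MvPolynomial.X (Sum.inr j) : A)) j).symm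
      rw [hqc]
      exact aux_coeff_isIntegralElem f hGm hqm (hmap ▸ dvd_mul_left q p) j
  rw [RingHom.finite_iff_isIntegral_and_finiteType]
  constructor
  · intro a
    induction a using MvPolynomial.induction_on with
    | C k =>
      have : (MvPolynomial.C k : A) = f (MvPolynomial.C k) := by
        show (MvPolynomial.C k : A)
          = MvPolynomial.aeval (fun k : Fin (m + n) => (p * q).coeff (k : ℕ))
            (MvPolynomial.C k)
        rw [MvPolynomial.aeval_C, MvPolynomial.algebraMap_eq]
      rw [this]
      exact f.isIntegralElem_map
    | add a b ha hb => exact ha.add f hb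
    | mul_X a s ha => exact ha.mul f (hXint s)
  · have hcomp : f.comp (algebraMap K B) = algebraMap K A := by
      rw [hfdef, AlgHom.toRingHom_eq_coe]
      exact AlgHom.comp_algebraMap _
    refine RingHom.FiniteType.of_comp_finiteType (f := algebraMap K B) ?_
    rw [hcomp]
    show @Algebra.FiniteType K A _ _ (algebraMap K A).toAlgebra
    have e : (algebraMap K A).toAlgebra = (inferInstance : Algebra K A) :=
      Algebra.algebra_ext _ _ fun r => rfl
    rw [e]
    exact inferInstance
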